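/- Every rate pair achievable by the mixed MABC protocol region is contained in the DF MABC protocol region: if R_a < min{Δ1·I(X_a;Y_r), Δ2·(I(U_r;Y_b) − I(U_r;U_b))}, R_b < Δ1·I(X_b; Ŷ_r | X_a), and Δ1·I(Y_r; Ŷ_r | X_a) < min{Δ2·I(U_r,U_b; Y_a), Δ2·I(U_b; U_r, Y_a)}, then R_a < min{Δ1·I(X_a;Y_r|X_b), Δ2·I(X_r;Y_b)}, R_b < min{Δ1·I(X_b;Y_r|X_a), Δ2·I(X_r;Y_a)}, and R_a + R_b < Δ1·I(X_a,X_b;Y_r). -/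

import Mathlib

open Finset

namespace BiDir

variable {Ω : Type} [Fintype Ω]

/-- Probability that `X = a` under the pmf `μ` on the finite sample space `Ω`. -/
noncomputable def pr (μ : Ω → ℝ) {A : Type} [Fintype A] [DecidableEq A]
    (X : Ω → A) (a : A) : ℝ :=
  ∑ ω, if X ω = a then μ ω else 0

/-- Shannon entropy (base 2) of the discrete random variable `X`. -/
noncomputable def ent (μ : Ω → ℝ) {A : Type} [Fintype A] [DecidableEq A]
    (X : Ω → A) : ℝ :=
  -∑ a, pr μ X a * Real.logb 2 (pr μ X a)

/-- Shannon mutual information `I(X;Y)`. -/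
noncomputable def mi (μ : Ω → ℝ) {A B : Type} [Fintype A] [DecidableEq A]
    [Fintype B] [DecidableEq B] (X : Ω → A) (Y : Ω → B) : ℝ :=
  ent μ X + ent μ Y - ent μ (fun ω => (X ω, Y ω))

/-- Conditional mutual information `I(X;Y|Z)`. -/
noncomputable def cmi (μ : Ω → ℝ) {A B C : Type} [Fintype A] [DecidableEq A]
    [Fintype B] [DecidableEq B] [Fintype C] [DecidableEq C]
    (X : Ω → A) (Y : Ω → B) (Z : Ω → C) : ℝ :=
  ent μ (fun ω => (X ω, Z ω)) + ent μ (fun ω => (Y ω, Z ω))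
    - ent μ (fun ω => (X ω, Y ω, Z ω)) - ent μ Z

/-- `μ` is a probability mass function. -/
def IsPMF (μ : Ω → ℝ) : Prop := (∀ ω, 0 ≤ μ ω) ∧ ∑ ω, μ ω = 1

/-- `X` and `Y` are independent under `μ`. -/
def Indep (μ : Ω → ℝ) {A B : Type} [Fintype A] [DecidableEq A]
    [Fintype B] [DecidableEq B] (X : Ω → A) (Y : Ω → B) : Prop :=
  ∀ a b, pr μ (fun ω => (X ω, Y ω)) (a, b) = pr μ X a * pr μ Y b

/-- `X` and `Y` are conditionally independent given `Z` under `μ`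
(equivalently, `X → Z → Y` is a Markov chain). -/
def CondIndep (μ : Ω → ℝ) {A B C : Type} [Fintype A] [DecidableEq A]
    [Fintype B] [DecidableEq B] [Fintype C] [DecidableEq C]
    (X : Ω → A) (Y : Ω → B) (Z : Ω → C) : Prop :=
  ∀ a b c, pr μ (fun ω => (X ω, Y ω, Z ω)) (a, b, c) * pr μ Z c =
    pr μ (fun ω => (X ω, Z ω)) (a, c) * pr μ (fun ω => (Y ω, Z ω)) (b, c)

end BiDir

namespace BiDir

variable {Ω : Type} [Fintype Ω] {μ : Ω → ℝ} {A B C G W : Type} [Fintype A] [DecidableEq A]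
  [Fintype B] [DecidableEq B] [Fintype C] [DecidableEq C]
  [Fintype G] [DecidableEq G] [Fintype W] [DecidableEq W]

lemma pr_nonneg (hμ : IsPMF μ) (X : Ω → A) (a : A) : 0 ≤ pr μ X a := by
  refine Finset.sum_nonneg fun ω _ => ?_
  split <;> simp [hμ.1 ω]

lemma pr_sum_one (hμ : IsPMF μ) (X : Ω → A) : ∑ a, pr μ X a = 1 := by
  unfold pr
  rw [Finset.sum_comm]
  simp [hμ.2]

lemma pr_comp (μ : Ω → ℝ) (V : Ω → G) (f : G → A) (y : A) :
    pr μ (fun ω => f (V ω)) y = ∑ v, if f v = y then pr μ V v else 0 := by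
  unfold pr
  calc (∑ ω, if f (V ω) = y then μ ω else 0)
      = ∑ ω, ∑ v, if V ω = v then (if f v = y then μ ω else 0) else 0 := by
        refine Finset.sum_congr rfl fun ω _ => ?_
        rw [Finset.sum_ite_eq Finset.univ (V ω) (fun v => if f v = y then μ ω else 0)]
        simp
    _ = ∑ v, ∑ ω, if V ω = v then (if f v = y then μ ω else 0) else 0 := Finset.sum_comm
    _ = ∑ v, if f v = y then (∑ ω, if V ω = v then μ ω else 0) else 0 := by
        refine Finset.sum_congr rfl fun v _ => ?_
        by_cases h : f v = y <;> simp [h]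

lemma pr_le_comp (hμ : IsPMF μ) (V : Ω → G) (f : G → A) (v : G) :
    pr μ V v ≤ pr μ (fun ω => f (V ω)) (f v) := by
  refine Finset.sum_le_sum fun ω _ => ?_
  by_cases h : V ω = v
  · simp [h]
  · simp only [h, if_false]
    split <;> simp [hμ.1 ω]

lemma ent_comp (μ : Ω → ℝ) (V : Ω → G) (f : G → A) :
    ent μ (fun ω => f (V ω)) =
      -∑ v, pr μ V v * Real.logb 2 (pr μ (fun ω => f (V ω)) (f v)) := by
  unfold ent
  congr 1
  calc (∑ a, pr μ (fun ω => f (V ω)) a * Real.logb 2 (pr μ (fun ω => f (V ω)) a))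
      = ∑ a, ∑ v, (if f v = a then pr μ V v * Real.logb 2 (pr μ (fun ω => f (V ω)) a) else 0) := by
        refine Finset.sum_congr rfl fun a _ => ?_
        rw [pr_comp μ V f a, Finset.sum_mul]
        refine Finset.sum_congr rfl fun v _ => ?_
        by_cases h : f v = a <;> simp [h]
    _ = ∑ v, ∑ a, (if f v = a then pr μ V v * Real.logb 2 (pr μ (fun ω => f (V ω)) a) else 0) :=
        Finset.sum_comm
    _ = ∑ v, pr μ V v * Real.logb 2 (pr μ (fun ω => f (V ω)) (f v)) := by
        refine Finset.sum_congr rfl fun v _ => ?_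
        rw [Finset.sum_ite_eq Finset.univ (f v)]
        simp


lemma ent_comp_inj (μ : Ω → ℝ) (V : Ω → G) {g : G → A} (hg : Function.Injective g) :
    ent μ (fun ω => g (V ω)) = ent μ V := by
  have hpr : ∀ v, pr μ (fun ω => g (V ω)) (g v) = pr μ V v := by
    intro v
    unfold pr
    refine Finset.sum_congr rfl fun ω _ => ?_
    simp [hg.eq_iff]
  rw [ent_comp μ V g]
  unfold ent
  congr 1
  refine Finset.sum_congr rfl fun v _ => ?_
  rw [hpr v]

lemma pr_pair_marg (μ : Ω → ℝ) (X : Ω → A) (Z : Ω → C) (c : C) :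
    ∑ a, pr μ (fun ω => (X ω, Z ω)) (a, c) = pr μ Z c := by
  unfold pr
  rw [Finset.sum_comm]
  refine Finset.sum_congr rfl fun ω _ => ?_
  rw [Finset.sum_congr rfl (g := fun a => if X ω = a then (if Z ω = c then μ ω else 0) else 0)
    (fun a _ => by by_cases h1 : X ω = a <;> by_cases h2 : Z ω = c <;> simp_all [Prod.ext_iff])]
  rw [Finset.sum_ite_eq Finset.univ (X ω)]
  simp


lemma cmi_rep (μ : Ω → ℝ) (X : Ω → A) (Y : Ω → B) (Z : Ω → C) :
    cmi μ X Y Z = ∑ t : A × B × C, pr μ (fun ω => (X ω, Y ω, Z ω)) t *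
      (Real.logb 2 (pr μ (fun ω => (X ω, Y ω, Z ω)) t)
        + Real.logb 2 (pr μ Z t.2.2)
        - Real.logb 2 (pr μ (fun ω => (X ω, Z ω)) (t.1, t.2.2))
        - Real.logb 2 (pr μ (fun ω => (Y ω, Z ω)) (t.2.1, t.2.2))) := by
  have h1 : ent μ (fun ω => (X ω, Z ω)) = -∑ t : A × B × C,
      pr μ (fun ω => (X ω, Y ω, Z ω)) t *
        Real.logb 2 (pr μ (fun ω => (X ω, Z ω)) (t.1, t.2.2)) :=
    ent_comp μ (fun ω => (X ω, Y ω, Z ω)) (fun t => (t.1, t.2.2))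
  have h2 : ent μ (fun ω => (Y ω, Z ω)) = -∑ t : A × B × C,
      pr μ (fun ω => (X ω, Y ω, Z ω)) t *
        Real.logb 2 (pr μ (fun ω => (Y ω, Z ω)) (t.2.1, t.2.2)) :=
    ent_comp μ (fun ω => (X ω, Y ω, Z ω)) (fun t => (t.2.1, t.2.2))
  have h4 : ent μ Z = -∑ t : A × B × C,
      pr μ (fun ω => (X ω, Y ω, Z ω)) t * Real.logb 2 (pr μ Z t.2.2) :=
    ent_comp μ (fun ω => (X ω, Y ω, Z ω)) (fun t => t.2.2)
  have h3 : ent μ (fun ω => (X ω, Y ω, Z ω)) = -∑ t : A × B × C,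
      pr μ (fun ω => (X ω, Y ω, Z ω)) t *
        Real.logb 2 (pr μ (fun ω => (X ω, Y ω, Z ω)) t) := rfl
  unfold cmi
  rw [h1, h2, h3, h4]
  simp only [mul_add, mul_sub, Finset.sum_add_distrib, Finset.sum_sub_distrib]
  ring

lemma mi_rep (μ : Ω → ℝ) (X : Ω → A) (Y : Ω → B) :
    mi μ X Y = ∑ t : A × B, pr μ (fun ω => (X ω, Y ω)) t *
      (Real.logb 2 (pr μ (fun ω => (X ω, Y ω)) t)
        - Real.logb 2 (pr μ X t.1) - Real.logb 2 (pr μ Y t.2)) := by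
  have h1 : ent μ X = -∑ t : A × B,
      pr μ (fun ω => (X ω, Y ω)) t * Real.logb 2 (pr μ X t.1) :=
    ent_comp μ (fun ω => (X ω, Y ω)) (fun t => t.1)
  have h2 : ent μ Y = -∑ t : A × B,
      pr μ (fun ω => (X ω, Y ω)) t * Real.logb 2 (pr μ Y t.2) :=
    ent_comp μ (fun ω => (X ω, Y ω)) (fun t => t.2)
  have h3 : ent μ (fun ω => (X ω, Y ω)) = -∑ t : A × B,
      pr μ (fun ω => (X ω, Y ω)) t *
        Real.logb 2 (pr μ (fun ω => (X ω, Y ω)) t) := rfl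
  unfold mi
  rw [h1, h2, h3]
  simp only [mul_sub, Finset.sum_sub_distrib]
  ring

lemma cmi_nonneg (hμ : IsPMF μ) (X : Ω → A) (Y : Ω → B) (Z : Ω → C) :
    0 ≤ cmi μ X Y Z := by
  rw [cmi_rep]
  have hL : (0:ℝ) < Real.log 2 := Real.log_pos one_lt_two
  -- pointwise rewrite logb into log
  have hrw : ∀ t : A × B × C, pr μ (fun ω => (X ω, Y ω, Z ω)) t *
      (Real.logb 2 (pr μ (fun ω => (X ω, Y ω, Z ω)) t)
        + Real.logb 2 (pr μ Z t.2.2)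
        - Real.logb 2 (pr μ (fun ω => (X ω, Z ω)) (t.1, t.2.2))
        - Real.logb 2 (pr μ (fun ω => (Y ω, Z ω)) (t.2.1, t.2.2)))
      = (pr μ (fun ω => (X ω, Y ω, Z ω)) t *
        (Real.log (pr μ (fun ω => (X ω, Y ω, Z ω)) t)
          + Real.log (pr μ Z t.2.2)
          - Real.log (pr μ (fun ω => (X ω, Z ω)) (t.1, t.2.2))
          - Real.log (pr μ (fun ω => (Y ω, Z ω)) (t.2.1, t.2.2)))) / Real.log 2 := by
    intro t
    simp only [Real.logb]
    ring
  rw [Finset.sum_congr rfl fun t _ => hrw t, ← Finset.sum_div]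
  apply div_nonneg _ hL.le
  -- main estimate
  have hmain : ∀ t : A × B × C,
      pr μ (fun ω => (X ω, Y ω, Z ω)) t -
        pr μ (fun ω => (X ω, Z ω)) (t.1, t.2.2) *
          pr μ (fun ω => (Y ω, Z ω)) (t.2.1, t.2.2) / pr μ Z t.2.2
      ≤ pr μ (fun ω => (X ω, Y ω, Z ω)) t *
        (Real.log (pr μ (fun ω => (X ω, Y ω, Z ω)) t)
          + Real.log (pr μ Z t.2.2)
          - Real.log (pr μ (fun ω => (X ω, Z ω)) (t.1, t.2.2))
          - Real.log (pr μ (fun ω => (Y ω, Z ω)) (t.2.1, t.2.2))) := by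
    intro t
    set q := pr μ (fun ω => (X ω, Y ω, Z ω)) t with hq
    rcases eq_or_lt_of_le (pr_nonneg hμ (fun ω => (X ω, Y ω, Z ω)) t) with h0 | h0
    · rw [hq, ← h0]
      simp only [zero_mul, zero_sub, neg_nonpos]
      exact div_nonneg (mul_nonneg (pr_nonneg hμ _ _) (pr_nonneg hμ _ _)) (pr_nonneg hμ _ _)
    · have hxz : 0 < pr μ (fun ω => (X ω, Z ω)) (t.1, t.2.2) :=
        lt_of_lt_of_le h0 (pr_le_comp hμ (fun ω => (X ω, Y ω, Z ω)) (fun t => (t.1, t.2.2)) t)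
      have hyz : 0 < pr μ (fun ω => (Y ω, Z ω)) (t.2.1, t.2.2) :=
        lt_of_lt_of_le h0 (pr_le_comp hμ (fun ω => (X ω, Y ω, Z ω)) (fun t => (t.2.1, t.2.2)) t)
      have hz : 0 < pr μ Z t.2.2 :=
        lt_of_lt_of_le h0 (pr_le_comp hμ (fun ω => (X ω, Y ω, Z ω)) (fun t => t.2.2) t)
      set pxz := pr μ (fun ω => (X ω, Z ω)) (t.1, t.2.2)
      set pyz := pr μ (fun ω => (Y ω, Z ω)) (t.2.1, t.2.2)
      set pz := pr μ Z t.2.2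
      have hr : (0:ℝ) < pxz * pyz / (q * pz) := by positivity
      have hlog := Real.log_le_sub_one_of_pos hr
      have hexp : Real.log (pxz * pyz / (q * pz)) =
          Real.log pxz + Real.log pyz - Real.log q - Real.log pz := by
        rw [Real.log_div (by positivity) (by positivity),
          Real.log_mul (ne_of_gt hxz) (ne_of_gt hyz),
          Real.log_mul (ne_of_gt h0) (ne_of_gt hz)]
        ring
      have hqr : q * (pxz * pyz / (q * pz)) = pxz * pyz / pz := by
        rw [mul_div_assoc', mul_div_mul_left (c := q) _ _ (ne_of_gt h0 : q ≠ 0)]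
      nlinarith [mul_le_mul_of_nonneg_left hlog h0.le]
  have hsum : ∑ t : A × B × C,
      (pr μ (fun ω => (X ω, Y ω, Z ω)) t -
        pr μ (fun ω => (X ω, Z ω)) (t.1, t.2.2) *
          pr μ (fun ω => (Y ω, Z ω)) (t.2.1, t.2.2) / pr μ Z t.2.2) ≥ 0 := by
    rw [Finset.sum_sub_distrib, pr_sum_one hμ]
    have hS : ∑ t : A × B × C,
        pr μ (fun ω => (X ω, Z ω)) (t.1, t.2.2) *
          pr μ (fun ω => (Y ω, Z ω)) (t.2.1, t.2.2) / pr μ Z t.2.2 ≤ 1 := by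
      calc ∑ t : A × B × C,
            pr μ (fun ω => (X ω, Z ω)) (t.1, t.2.2) *
              pr μ (fun ω => (Y ω, Z ω)) (t.2.1, t.2.2) / pr μ Z t.2.2
          = ∑ c : C, ∑ a : A, ∑ b : B,
              pr μ (fun ω => (X ω, Z ω)) (a, c) *
                pr μ (fun ω => (Y ω, Z ω)) (b, c) / pr μ Z c := by
            rw [Fintype.sum_prod_type]
            rw [Finset.sum_congr rfl fun a _ => Fintype.sum_prod_type ..]
            rw [Finset.sum_congr rfl fun a _ => Finset.sum_comm]
            exact Finset.sum_comm
        _ = ∑ c : C, pr μ Z c * pr μ Z c / pr μ Z c := by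
            refine Finset.sum_congr rfl fun c _ => ?_
            rw [Finset.sum_congr rfl fun a _ => (Finset.sum_div ..).symm,
              (Finset.sum_div ..).symm, ← Finset.sum_mul_sum,
              pr_pair_marg μ X Z c, pr_pair_marg μ Y Z c]
        _ ≤ ∑ c : C, pr μ Z c := by
            refine Finset.sum_le_sum fun c _ => ?_
            rcases eq_or_lt_of_le (pr_nonneg hμ Z c) with h0 | h0
            · rw [← h0]; simp
            · rw [mul_div_assoc, div_self (ne_of_gt h0), mul_one]
        _ = 1 := pr_sum_one hμ Z
    linarith
  calc (0:ℝ) ≤ ∑ t : A × B × C,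
        (pr μ (fun ω => (X ω, Y ω, Z ω)) t -
          pr μ (fun ω => (X ω, Z ω)) (t.1, t.2.2) *
            pr μ (fun ω => (Y ω, Z ω)) (t.2.1, t.2.2) / pr μ Z t.2.2) := hsum
    _ ≤ _ := Finset.sum_le_sum fun t _ => hmain t


lemma mi_nonneg (hμ : IsPMF μ) (X : Ω → A) (Y : Ω → B) : 0 ≤ mi μ X Y := by
  have hX : ent μ (fun ω => (X ω, ())) = ent μ X :=
    ent_comp_inj μ X (g := fun a => (a, ())) (fun a b h => congrArg Prod.fst h)
  have hY : ent μ (fun ω => (Y ω, ())) = ent μ Y :=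
    ent_comp_inj μ Y (g := fun b => (b, ())) (fun a b h => congrArg Prod.fst h)
  have hXY : ent μ (fun ω => (X ω, Y ω, ())) = ent μ (fun ω => (X ω, Y ω)) :=
    ent_comp_inj μ (fun ω => (X ω, Y ω)) (g := fun p => (p.1, p.2, ()))
      (fun p q h => by
        have h1 := congrArg Prod.fst h
        have h2 := congrArg (fun r => r.2.1) h
        exact Prod.ext h1 h2)
  have hU : ent μ (fun _ : Ω => ()) = 0 := by
    unfold ent pr
    simp [hμ.2]
  have : mi μ X Y = cmi μ X Y (fun _ => ()) := by
    unfold mi cmi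
    rw [hX, hY, hXY, hU]
    ring
  rw [this]
  exact cmi_nonneg hμ X Y _

lemma cmi_eq_zero_of_condIndep (hμ : IsPMF μ) {X : Ω → A} {Y : Ω → B} {Z : Ω → C}
    (h : CondIndep μ X Y Z) : cmi μ X Y Z = 0 := by
  rw [cmi_rep]
  refine Finset.sum_eq_zero fun t _ => ?_
  rcases eq_or_lt_of_le (pr_nonneg hμ (fun ω => (X ω, Y ω, Z ω)) t) with h0 | h0
  · rw [← h0, zero_mul]
  · have hxz : 0 < pr μ (fun ω => (X ω, Z ω)) (t.1, t.2.2) :=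
      lt_of_lt_of_le h0 (pr_le_comp hμ (fun ω => (X ω, Y ω, Z ω)) (fun t => (t.1, t.2.2)) t)
    have hyz : 0 < pr μ (fun ω => (Y ω, Z ω)) (t.2.1, t.2.2) :=
      lt_of_lt_of_le h0 (pr_le_comp hμ (fun ω => (X ω, Y ω, Z ω)) (fun t => (t.2.1, t.2.2)) t)
    have hz : 0 < pr μ Z t.2.2 :=
      lt_of_lt_of_le h0 (pr_le_comp hμ (fun ω => (X ω, Y ω, Z ω)) (fun t => t.2.2) t)
    have hc : pr μ (fun ω => (X ω, Y ω, Z ω)) t * pr μ Z t.2.2 =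
        pr μ (fun ω => (X ω, Z ω)) (t.1, t.2.2) * pr μ (fun ω => (Y ω, Z ω)) (t.2.1, t.2.2) :=
      h t.1 t.2.1 t.2.2
    have hlog : Real.logb 2 (pr μ (fun ω => (X ω, Y ω, Z ω)) t * pr μ Z t.2.2) =
        Real.logb 2 (pr μ (fun ω => (X ω, Z ω)) (t.1, t.2.2) *
          pr μ (fun ω => (Y ω, Z ω)) (t.2.1, t.2.2)) := by rw [hc]
    rw [Real.logb_mul (ne_of_gt h0) (ne_of_gt hz),
      Real.logb_mul (ne_of_gt hxz) (ne_of_gt hyz)] at hlog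
    rw [show Real.logb 2 (pr μ (fun ω => (X ω, Y ω, Z ω)) t)
        + Real.logb 2 (pr μ Z t.2.2)
        - Real.logb 2 (pr μ (fun ω => (X ω, Z ω)) (t.1, t.2.2))
        - Real.logb 2 (pr μ (fun ω => (Y ω, Z ω)) (t.2.1, t.2.2)) = 0 by
      rw [hlog]; ring]
    ring

lemma mi_eq_zero_of_indep (hμ : IsPMF μ) {X : Ω → A} {Y : Ω → B}
    (h : Indep μ X Y) : mi μ X Y = 0 := by
  rw [mi_rep]
  refine Finset.sum_eq_zero fun t _ => ?_
  rcases eq_or_lt_of_le (pr_nonneg hμ (fun ω => (X ω, Y ω)) t) with h0 | h0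
  · rw [← h0, zero_mul]
  · have hx : 0 < pr μ X t.1 :=
      lt_of_lt_of_le h0 (pr_le_comp hμ (fun ω => (X ω, Y ω)) (fun t => t.1) t)
    have hy : 0 < pr μ Y t.2 :=
      lt_of_lt_of_le h0 (pr_le_comp hμ (fun ω => (X ω, Y ω)) (fun t => t.2) t)
    have hc : pr μ (fun ω => (X ω, Y ω)) t = pr μ X t.1 * pr μ Y t.2 := h t.1 t.2
    rw [show Real.logb 2 (pr μ (fun ω => (X ω, Y ω)) t)
        - Real.logb 2 (pr μ X t.1) - Real.logb 2 (pr μ Y t.2) = 0 by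
      rw [hc, Real.logb_mul (ne_of_gt hx) (ne_of_gt hy)]; ring]
    ring


section Identities

variable (X : Ω → A) (Y : Ω → B) (Z : Ω → C) (V : Ω → W)

lemma mi_comm : mi μ X Y = mi μ Y X := by
  have e1 : ent μ (fun ω => (Y ω, X ω)) = ent μ (fun ω => (X ω, Y ω)) :=
    ent_comp_inj μ (fun ω => (X ω, Y ω)) (g := fun p => (p.2, p.1))
      (fun p q h => by simp_all [Prod.ext_iff])
  unfold mi
  rw [e1]; ring

lemma cmi_swap12 : cmi μ X Y Z = cmi μ Y X Z := by
  have e1 : ent μ (fun ω => (Y ω, X ω, Z ω)) = ent μ (fun ω => (X ω, Y ω, Z ω)) :=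
    ent_comp_inj μ (fun ω => (X ω, Y ω, Z ω)) (g := fun p => (p.2.1, p.1, p.2.2))
      (fun p q h => by simp_all [Prod.ext_iff])
  unfold cmi
  rw [e1]; ring

lemma mi_pair_left : mi μ (fun ω => (X ω, Y ω)) Z = mi μ X Z + cmi μ Y Z X := by
  have e1 : ent μ (fun ω => (Y ω, X ω)) = ent μ (fun ω => (X ω, Y ω)) :=
    ent_comp_inj μ (fun ω => (X ω, Y ω)) (g := fun p => (p.2, p.1))
      (fun p q h => by simp_all [Prod.ext_iff])
  have e2 : ent μ (fun ω => (Z ω, X ω)) = ent μ (fun ω => (X ω, Z ω)) :=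
    ent_comp_inj μ (fun ω => (X ω, Z ω)) (g := fun p => (p.2, p.1))
      (fun p q h => by simp_all [Prod.ext_iff])
  have e3 : ent μ (fun ω => (Y ω, Z ω, X ω)) = ent μ (fun ω => ((X ω, Y ω), Z ω)) :=
    ent_comp_inj μ (fun ω => ((X ω, Y ω), Z ω)) (g := fun p => (p.1.2, p.2, p.1.1))
      (fun p q h => by simp_all [Prod.ext_iff])
  unfold mi cmi
  rw [e1, e2, e3]; ring

lemma mi_pair_left_comm :
    mi μ (fun ω => (X ω, Y ω)) Z = mi μ (fun ω => (Y ω, X ω)) Z := by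
  have e1 : ent μ (fun ω => (Y ω, X ω)) = ent μ (fun ω => (X ω, Y ω)) :=
    ent_comp_inj μ (fun ω => (X ω, Y ω)) (g := fun p => (p.2, p.1))
      (fun p q h => by simp_all [Prod.ext_iff])
  have e2 : ent μ (fun ω => ((Y ω, X ω), Z ω)) = ent μ (fun ω => ((X ω, Y ω), Z ω)) :=
    ent_comp_inj μ (fun ω => ((X ω, Y ω), Z ω)) (g := fun p => ((p.1.2, p.1.1), p.2))
      (fun p q h => by simp_all [Prod.ext_iff])
  unfold mi
  rw [e1, e2]

lemma cmi_pair_right :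
    cmi μ X (fun ω => (Y ω, V ω)) Z = cmi μ X Y Z + cmi μ X V (fun ω => (Y ω, Z ω)) := by
  have f1 : ent μ (fun ω => (V ω, Y ω, Z ω)) = ent μ (fun ω => ((Y ω, V ω), Z ω)) :=
    ent_comp_inj μ (fun ω => ((Y ω, V ω), Z ω)) (g := fun p => (p.1.2, p.1.1, p.2))
      (fun p q h => by simp_all [Prod.ext_iff])
  have f2 : ent μ (fun ω => (X ω, V ω, Y ω, Z ω)) =
      ent μ (fun ω => (X ω, (Y ω, V ω), Z ω)) :=
    ent_comp_inj μ (fun ω => (X ω, (Y ω, V ω), Z ω))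
      (g := fun p => (p.1, p.2.1.2, p.2.1.1, p.2.2))
      (fun p q h => by simp_all [Prod.ext_iff])
  unfold cmi
  rw [f1, f2]; ring

lemma cmi_pair_snd_comm :
    cmi μ X (fun ω => (Y ω, V ω)) Z = cmi μ X (fun ω => (V ω, Y ω)) Z := by
  have f1 : ent μ (fun ω => ((V ω, Y ω), Z ω)) = ent μ (fun ω => ((Y ω, V ω), Z ω)) :=
    ent_comp_inj μ (fun ω => ((Y ω, V ω), Z ω)) (g := fun p => ((p.1.2, p.1.1), p.2))
      (fun p q h => by simp_all [Prod.ext_iff])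
  have f2 : ent μ (fun ω => (X ω, (V ω, Y ω), Z ω)) =
      ent μ (fun ω => (X ω, (Y ω, V ω), Z ω)) :=
    ent_comp_inj μ (fun ω => (X ω, (Y ω, V ω), Z ω))
      (g := fun p => (p.1, (p.2.1.2, p.2.1.1), p.2.2))
      (fun p q h => by simp_all [Prod.ext_iff])
  unfold cmi
  rw [f1, f2]

lemma cmi_cond_comm :
    cmi μ X Y (fun ω => (Z ω, V ω)) = cmi μ X Y (fun ω => (V ω, Z ω)) := by
  have f1 : ent μ (fun ω => (X ω, V ω, Z ω)) = ent μ (fun ω => (X ω, Z ω, V ω)) :=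
    ent_comp_inj μ (fun ω => (X ω, Z ω, V ω)) (g := fun p => (p.1, p.2.2, p.2.1))
      (fun p q h => by simp_all [Prod.ext_iff])
  have f2 : ent μ (fun ω => (Y ω, V ω, Z ω)) = ent μ (fun ω => (Y ω, Z ω, V ω)) :=
    ent_comp_inj μ (fun ω => (Y ω, Z ω, V ω)) (g := fun p => (p.1, p.2.2, p.2.1))
      (fun p q h => by simp_all [Prod.ext_iff])
  have f3 : ent μ (fun ω => (X ω, Y ω, V ω, Z ω)) =
      ent μ (fun ω => (X ω, Y ω, Z ω, V ω)) :=
    ent_comp_inj μ (fun ω => (X ω, Y ω, Z ω, V ω))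
      (g := fun p => (p.1, p.2.1, p.2.2.2, p.2.2.1))
      (fun p q h => by simp_all [Prod.ext_iff])
  have f4 : ent μ (fun ω => (V ω, Z ω)) = ent μ (fun ω => (Z ω, V ω)) :=
    ent_comp_inj μ (fun ω => (Z ω, V ω)) (g := fun p => (p.2, p.1))
      (fun p q h => by simp_all [Prod.ext_iff])
  unfold cmi
  rw [f1, f2, f3, f4]

end Identities


/-- Theorem 7 of the paper: every rate pair satisfying the mixed MABC
constraints also satisfies the DF MABC constraints.  Phase-1 variables
`X_a, X_b, Y_r, Ŷ_r` and phase-2 variables `U_r, U_b, X_r, Y_a, Y_b` with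
`X_a ⟂ X_b`, Markov chains `(X_a,X_b) → Y_r → Ŷ_r` and `(U_r,U_b) → X_r → (Y_a,Y_b)`,
and the two phase tuples independent of each other. -/
theorem stmt_3 {Ω A B YR YR' UR UB XR YA YB : Type} [Fintype Ω]
    [Fintype A] [DecidableEq A] [Fintype B] [DecidableEq B]
    [Fintype YR] [DecidableEq YR] [Fintype YR'] [DecidableEq YR']
    [Fintype UR] [DecidableEq UR] [Fintype UB] [DecidableEq UB]
    [Fintype XR] [DecidableEq XR] [Fintype YA] [DecidableEq YA]
    [Fintype YB] [DecidableEq YB]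
    (μ : Ω → ℝ) (Xa : Ω → A) (Xb : Ω → B) (Yr : Ω → YR) (Yhr : Ω → YR')
    (Ur : Ω → UR) (Ub : Ω → UB) (Xr : Ω → XR) (Ya : Ω → YA) (Yb : Ω → YB)
    (Δ1 Δ2 Ra Rb : ℝ)
    (hμ : IsPMF μ) (hΔ1 : 0 ≤ Δ1) (hΔ2 : 0 ≤ Δ2)
    (hind : Indep μ Xa Xb)
    (hMarkov1 : CondIndep μ Yhr (fun ω => (Xa ω, Xb ω)) Yr)
    (hMarkov2 : CondIndep μ (fun ω => (Ya ω, Yb ω)) (fun ω => (Ur ω, Ub ω)) Xr)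
    (hPhases : Indep μ (fun ω => (Xa ω, Xb ω, Yr ω, Yhr ω))
      (fun ω => (Ur ω, Ub ω, Xr ω, Ya ω, Yb ω)))
    (hRa : Ra < min (Δ1 * mi μ Xa Yr) (Δ2 * (mi μ Ur Yb - mi μ Ur Ub)))
    (hRb : Rb < Δ1 * cmi μ Xb Yhr Xa)
    (hSub : Δ1 * cmi μ Yr Yhr Xa <
      min (Δ2 * mi μ (fun ω => (Ur ω, Ub ω)) Ya) (Δ2 * mi μ Ub (fun ω => (Ur ω, Ya ω)))) :
    Ra < min (Δ1 * cmi μ Xa Yr Xb) (Δ2 * mi μ Xr Yb) ∧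
    Rb < min (Δ1 * cmi μ Xb Yr Xa) (Δ2 * mi μ Xr Ya) ∧
    Ra + Rb < Δ1 * mi μ (fun ω => (Xa ω, Xb ω)) Yr := by
  -- Phase 1 zero fact
  have hz1 : cmi μ Yhr (fun ω => (Xa ω, Xb ω)) Yr = 0 :=
    cmi_eq_zero_of_condIndep hμ hMarkov1
  have hsplit1 : cmi μ Yhr (fun ω => (Xa ω, Xb ω)) Yr =
      cmi μ Yhr Xa Yr + cmi μ Yhr Xb (fun ω => (Xa ω, Yr ω)) :=
    cmi_pair_right Yhr Xa Yr Xb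
  have c1 : cmi μ Yhr Xb (fun ω => (Xa ω, Yr ω)) = 0 := by
    have h1 := cmi_nonneg hμ Yhr Xa Yr
    have h2 := cmi_nonneg hμ Yhr Xb (fun ω => (Xa ω, Yr ω))
    linarith
  have c1' : cmi μ Yhr Xb (fun ω => (Yr ω, Xa ω)) = 0 := by
    rw [cmi_cond_comm Yhr Xb Yr Xa]; exact c1
  -- P3 : I(Xb;Yhr|Xa) ≤ I(Xb;Yr|Xa)
  have hsplitA : cmi μ Xb (fun ω => (Yr ω, Yhr ω)) Xa =
      cmi μ Xb Yr Xa + cmi μ Xb Yhr (fun ω => (Yr ω, Xa ω)) :=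
    cmi_pair_right Xb Yr Xa Yhr
  have hsplitB : cmi μ Xb (fun ω => (Yhr ω, Yr ω)) Xa =
      cmi μ Xb Yhr Xa + cmi μ Xb Yr (fun ω => (Yhr ω, Xa ω)) :=
    cmi_pair_right Xb Yhr Xa Yr
  have hcommAB : cmi μ Xb (fun ω => (Yr ω, Yhr ω)) Xa =
      cmi μ Xb (fun ω => (Yhr ω, Yr ω)) Xa := cmi_pair_snd_comm Xb Yr Xa Yhr
  have cswap : cmi μ Xb Yhr (fun ω => (Yr ω, Xa ω)) =
      cmi μ Yhr Xb (fun ω => (Yr ω, Xa ω)) := cmi_swap12 (μ := μ) Xb Yhr _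
  have hP3 : cmi μ Xb Yhr Xa ≤ cmi μ Xb Yr Xa := by
    have hnn := cmi_nonneg hμ Xb Yr (fun ω => (Yhr ω, Xa ω))
    linarith
  -- P4 : I(Xb;Yhr|Xa) ≤ I(Yr;Yhr|Xa)
  have hsplitC : cmi μ Yhr (fun ω => (Xb ω, Yr ω)) Xa =
      cmi μ Yhr Xb Xa + cmi μ Yhr Yr (fun ω => (Xb ω, Xa ω)) :=
    cmi_pair_right Yhr Xb Xa Yr
  have hsplitD : cmi μ Yhr (fun ω => (Yr ω, Xb ω)) Xa =
      cmi μ Yhr Yr Xa + cmi μ Yhr Xb (fun ω => (Yr ω, Xa ω)) :=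
    cmi_pair_right Yhr Yr Xa Xb
  have hcommCD : cmi μ Yhr (fun ω => (Xb ω, Yr ω)) Xa =
      cmi μ Yhr (fun ω => (Yr ω, Xb ω)) Xa := cmi_pair_snd_comm Yhr Xb Xa Yr
  have hP4 : cmi μ Xb Yhr Xa ≤ cmi μ Yr Yhr Xa := by
    have h1 := cmi_swap12 (μ := μ) Xb Yhr Xa
    have h2 := cmi_swap12 (μ := μ) Yr Yhr Xa
    have hnn := cmi_nonneg hμ Yhr Yr (fun ω => (Xb ω, Xa ω))
    linarith
  -- P1 : I(Xa;Yr) ≤ I(Xa;Yr|Xb)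
  have hchain1 : mi μ (fun ω => (Xb ω, Yr ω)) Xa =
      mi μ Xb Xa + cmi μ Yr Xa Xb := mi_pair_left Xb Yr Xa
  have hchain2 : mi μ (fun ω => (Yr ω, Xb ω)) Xa =
      mi μ Yr Xa + cmi μ Xb Xa Yr := mi_pair_left Yr Xb Xa
  have hcomm12 : mi μ (fun ω => (Xb ω, Yr ω)) Xa =
      mi μ (fun ω => (Yr ω, Xb ω)) Xa := mi_pair_left_comm Xb Yr Xa
  have hind0 : mi μ Xb Xa = 0 := by
    rw [mi_comm Xb Xa]; exact mi_eq_zero_of_indep hμ hind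
  have hP1 : mi μ Xa Yr ≤ cmi μ Xa Yr Xb := by
    have h1 := cmi_swap12 (μ := μ) Xa Yr Xb
    have h2 := mi_comm (μ := μ) Yr Xa
    have hnn := cmi_nonneg hμ Xb Xa Yr
    linarith
  -- P5 : chain rule
  have hP5 : mi μ (fun ω => (Xa ω, Xb ω)) Yr =
      mi μ Xa Yr + cmi μ Xb Yr Xa := mi_pair_left Xa Xb Yr
  -- Phase 2 zero facts
  have hz2 : cmi μ (fun ω => (Ur ω, Ub ω)) (fun ω => (Ya ω, Yb ω)) Xr = 0 := by
    rw [cmi_swap12]; exact cmi_eq_zero_of_condIndep hμ hMarkov2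
  have hsplitE : cmi μ (fun ω => (Ur ω, Ub ω)) (fun ω => (Ya ω, Yb ω)) Xr =
      cmi μ (fun ω => (Ur ω, Ub ω)) Ya Xr +
        cmi μ (fun ω => (Ur ω, Ub ω)) Yb (fun ω => (Ya ω, Xr ω)) :=
    cmi_pair_right (fun ω => (Ur ω, Ub ω)) Ya Xr Yb
  have cUYa : cmi μ (fun ω => (Ur ω, Ub ω)) Ya Xr = 0 := by
    have h1 := cmi_nonneg hμ (fun ω => (Ur ω, Ub ω)) Ya Xr
    have h2 := cmi_nonneg hμ (fun ω => (Ur ω, Ub ω)) Yb (fun ω => (Ya ω, Xr ω))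
    linarith
  have hsplitF : cmi μ (fun ω => (Ur ω, Ub ω)) (fun ω => (Yb ω, Ya ω)) Xr =
      cmi μ (fun ω => (Ur ω, Ub ω)) Yb Xr +
        cmi μ (fun ω => (Ur ω, Ub ω)) Ya (fun ω => (Yb ω, Xr ω)) :=
    cmi_pair_right (fun ω => (Ur ω, Ub ω)) Yb Xr Ya
  have hcommEF : cmi μ (fun ω => (Ur ω, Ub ω)) (fun ω => (Yb ω, Ya ω)) Xr =
      cmi μ (fun ω => (Ur ω, Ub ω)) (fun ω => (Ya ω, Yb ω)) Xr := by
    rw [cmi_pair_snd_comm (fun ω => (Ur ω, Ub ω)) Yb Xr Ya]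
  have cUYb : cmi μ (fun ω => (Ur ω, Ub ω)) Yb Xr = 0 := by
    have h1 := cmi_nonneg hμ (fun ω => (Ur ω, Ub ω)) Yb Xr
    have h2 := cmi_nonneg hμ (fun ω => (Ur ω, Ub ω)) Ya (fun ω => (Yb ω, Xr ω))
    linarith
  -- data processing to Yb
  have d1 : mi μ (fun ω => ((Ur ω, Ub ω), Xr ω)) Yb =
      mi μ (fun ω => (Ur ω, Ub ω)) Yb + cmi μ Xr Yb (fun ω => (Ur ω, Ub ω)) :=
    mi_pair_left (fun ω => (Ur ω, Ub ω)) Xr Yb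
  have d2 : mi μ (fun ω => (Xr ω, (Ur ω, Ub ω))) Yb =
      mi μ Xr Yb + cmi μ (fun ω => (Ur ω, Ub ω)) Yb Xr :=
    mi_pair_left Xr (fun ω => (Ur ω, Ub ω)) Yb
  have d3 : mi μ (fun ω => ((Ur ω, Ub ω), Xr ω)) Yb =
      mi μ (fun ω => (Xr ω, (Ur ω, Ub ω))) Yb :=
    mi_pair_left_comm (fun ω => (Ur ω, Ub ω)) Xr Yb
  have hDPIb : mi μ (fun ω => (Ur ω, Ub ω)) Yb ≤ mi μ Xr Yb := by
    have hnn := cmi_nonneg hμ Xr Yb (fun ω => (Ur ω, Ub ω))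
    linarith
  -- data processing to Ya
  have d1' : mi μ (fun ω => ((Ur ω, Ub ω), Xr ω)) Ya =
      mi μ (fun ω => (Ur ω, Ub ω)) Ya + cmi μ Xr Ya (fun ω => (Ur ω, Ub ω)) :=
    mi_pair_left (fun ω => (Ur ω, Ub ω)) Xr Ya
  have d2' : mi μ (fun ω => (Xr ω, (Ur ω, Ub ω))) Ya =
      mi μ Xr Ya + cmi μ (fun ω => (Ur ω, Ub ω)) Ya Xr :=
    mi_pair_left Xr (fun ω => (Ur ω, Ub ω)) Ya
  have d3' : mi μ (fun ω => ((Ur ω, Ub ω), Xr ω)) Ya =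
      mi μ (fun ω => (Xr ω, (Ur ω, Ub ω))) Ya :=
    mi_pair_left_comm (fun ω => (Ur ω, Ub ω)) Xr Ya
  have hDPIa : mi μ (fun ω => (Ur ω, Ub ω)) Ya ≤ mi μ Xr Ya := by
    have hnn := cmi_nonneg hμ Xr Ya (fun ω => (Ur ω, Ub ω))
    linarith
  -- I(Ur;Yb) ≤ I(Ur,Ub;Yb)
  have hUr_le : mi μ Ur Yb ≤ mi μ (fun ω => (Ur ω, Ub ω)) Yb := by
    have h := mi_pair_left (μ := μ) Ur Ub Yb
    have hnn := cmi_nonneg hμ Ub Yb Ur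
    linarith
  have hUrUb : 0 ≤ mi μ Ur Ub := mi_nonneg hμ Ur Ub
  -- conclusions
  have hRa1 : Ra < Δ1 * mi μ Xa Yr := lt_of_lt_of_le hRa (min_le_left _ _)
  have hRa2 : Ra < Δ2 * (mi μ Ur Yb - mi μ Ur Ub) := lt_of_lt_of_le hRa (min_le_right _ _)
  have hSubA : Δ1 * cmi μ Yr Yhr Xa < Δ2 * mi μ (fun ω => (Ur ω, Ub ω)) Ya :=
    lt_of_lt_of_le hSub (min_le_left _ _)
  refine ⟨lt_min ?_ ?_, lt_min ?_ ?_, ?_⟩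
  · exact lt_of_lt_of_le hRa1 (mul_le_mul_of_nonneg_left hP1 hΔ1)
  · have hle : mi μ Ur Yb - mi μ Ur Ub ≤ mi μ Xr Yb := by linarith
    exact lt_of_lt_of_le hRa2 (mul_le_mul_of_nonneg_left hle hΔ2)
  · exact lt_of_lt_of_le hRb (mul_le_mul_of_nonneg_left hP3 hΔ1)
  · calc Rb < Δ1 * cmi μ Xb Yhr Xa := hRb
      _ ≤ Δ1 * cmi μ Yr Yhr Xa := mul_le_mul_of_nonneg_left hP4 hΔ1
      _ < Δ2 * mi μ (fun ω => (Ur ω, Ub ω)) Ya := hSubA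
      _ ≤ Δ2 * mi μ Xr Ya := mul_le_mul_of_nonneg_left hDPIa hΔ2
  · rw [hP5]
    have hmul := mul_add Δ1 (mi μ Xa Yr) (cmi μ Xb Yr Xa)
    have h1 : Δ1 * cmi μ Xb Yhr Xa ≤ Δ1 * cmi μ Xb Yr Xa :=
      mul_le_mul_of_nonneg_left hP3 hΔ1
    linarith


end BiDir
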